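/- Let M be a nonnegative kernel on a finite set S with x^{3/2}M_{α,β}(x) → L_{α,β} as x → ∞ and such that the matrix B of total masses has spectral radius strictly less than 1. Then Z_{α,β}(x) := Σ_{k≥1}[M^{*k}]_{α,β}(x) satisfies x^{3/2} Z_{α,β}(x) → [(1−B)^{-1} · L · (1−B)^{-1}]_{α,β} as x → ∞. -/

import Mathlib

open Filter Matrix

/-- Convolution of two matrix-valued kernels on `ℕ`. -/
noncomputable def kconv {S : Type*} [Fintype S]
    (F G : ℕ → Matrix S S ℝ) : ℕ → Matrix S S ℝ :=
  fun x => ∑ y ∈ Finset.range (x + 1), F y * G (x - y)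

/-- `n`-fold convolution power of a kernel; `kpow M 0` is the identity kernel
concentrated at `x = 0`. -/
noncomputable def kpow {S : Type*} [Fintype S] [DecidableEq S]
    (M : ℕ → Matrix S S ℝ) : ℕ → ℕ → Matrix S S ℝ
  | 0 => fun x => if x = 0 then 1 else 0
  | n + 1 => kconv M (kpow M n)

section SDPAux

noncomputable def rp (x : ℕ) : ℝ := (x : ℝ) ^ ((3:ℝ)/2)

lemma rp_nonneg (x : ℕ) : 0 ≤ rp x := Real.rpow_nonneg (Nat.cast_nonneg x) _

lemma rp_zero : rp 0 = 0 := by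
  simp only [rp, Nat.cast_zero]
  exact Real.zero_rpow (by norm_num)

lemma rp_pos {x : ℕ} (hx : 1 ≤ x) : 0 < rp x :=
  Real.rpow_pos_of_pos (by exact_mod_cast hx) _

lemma c2_nonneg : (0:ℝ) ≤ (2:ℝ) ^ ((3:ℝ)/2) := Real.rpow_nonneg (by norm_num) _

/-- If `1 ≤ z` and `x ≤ 2 z` then `rp x / rp z ≤ 2^(3/2)`. -/
lemma rp_div_le {x z : ℕ} (hz : 1 ≤ z) (hxz : (x:ℝ) ≤ 2 * z) :
    rp x / rp z ≤ (2:ℝ) ^ ((3:ℝ)/2) := by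
  have hz' : (0:ℝ) < z := by exact_mod_cast hz
  have : rp x / rp z = ((x:ℝ)/z) ^ ((3:ℝ)/2) := by
    rw [rp, rp, ← Real.div_rpow (Nat.cast_nonneg x) (le_of_lt hz')]
  rw [this]
  exact Real.rpow_le_rpow (by positivity) (by rw [div_le_iff₀ hz']; linarith) (by norm_num)

/-- Uniform bound on `rp x * G (x - y)` when `2 y ≤ x`. -/
lemma shifted_bound {G : ℕ → ℝ} {t : ℝ} (ht : 0 ≤ t)
    (hbd : ∀ z, rp z * G z ≤ t) (hG : ∀ z, 0 ≤ G z)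
    {x y : ℕ} (h2 : 2 * y ≤ x) :
    rp x * G (x - y) ≤ (2:ℝ) ^ ((3:ℝ)/2) * t := by
  rcases Nat.eq_zero_or_pos x with hx | hx
  · subst hx
    simp only [rp_zero, zero_mul]
    positivity
  · have hz : 1 ≤ x - y := by omega
    have hrpz : rp (x - y) ≠ 0 := ne_of_gt (rp_pos hz)
    have key : rp x * G (x-y) = (rp x / rp (x-y)) * (rp (x-y) * G (x-y)) := by
      field_simp
    rw [key]
    have h1 : rp x / rp (x-y) ≤ (2:ℝ) ^ ((3:ℝ)/2) := by
      apply rp_div_le hz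
      have : ((x - y : ℕ):ℝ) = (x:ℝ) - y := by
        push_cast [Nat.cast_sub (by omega : y ≤ x)]; ring
      rw [this]
      have h2' : (2*y:ℝ) ≤ x := by exact_mod_cast h2
      linarith
    exact mul_le_mul h1 (hbd _) (mul_nonneg (rp_nonneg _) (hG _)) c2_nonneg

/-- Shift invariance of the tail limit. -/
lemma tendsto_rp_shift {G : ℕ → ℝ} {l : ℝ}
    (h : Tendsto (fun x => rp x * G x) atTop (nhds l)) (y : ℕ) :
    Tendsto (fun x => rp x * G (x - y)) atTop (nhds l) := by
  have hsub : Tendsto (fun x : ℕ => x - y) atTop atTop := tendsto_sub_atTop_nat y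
  have h1 : Tendsto (fun x : ℕ => rp (x-y) * G (x-y)) atTop (nhds l) := h.comp hsub
  have hratio : Tendsto (fun x : ℕ => rp x / rp (x - y)) atTop (nhds 1) := by
    have hq : Tendsto (fun x : ℕ => (x:ℝ) / ((x - y : ℕ):ℝ)) atTop (nhds 1) := by
      have hb : Tendsto (fun n : ℕ => 1 + (y:ℝ) * ((n:ℝ))⁻¹) atTop (nhds 1) := by
        have := (tendsto_inv_atTop_nhds_zero_nat).const_mul (y:ℝ)
        simpa using (tendsto_const_nhds (x := (1:ℝ)) (f := atTop)).add this
      refine (hb.comp hsub).congr' ?_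
      filter_upwards [eventually_ge_atTop (y+1)] with x hx
      have hy : y ≤ x := by omega
      have hpos : (0:ℝ) < ((x - y : ℕ):ℝ) := by exact_mod_cast (by omega : 0 < x - y)
      have hc : ((x - y : ℕ):ℝ) = (x:ℝ) - y := by
        push_cast [Nat.cast_sub hy]; ring
      simp only [Function.comp]
      rw [hc]
      have hne : (x:ℝ) - y ≠ 0 := by rw [← hc]; exact ne_of_gt hpos
      field_simp
      ring
    have h32 : Tendsto (fun x : ℕ => ((x:ℝ) / ((x - y : ℕ):ℝ)) ^ ((3:ℝ)/2)) atTop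
        (nhds ((1:ℝ) ^ ((3:ℝ)/2))) := hq.rpow_const (Or.inr (by norm_num))
    rw [Real.one_rpow] at h32
    refine h32.congr fun x => ?_
    rw [rp, rp, ← Real.div_rpow (Nat.cast_nonneg x) (Nat.cast_nonneg _)]
  have := hratio.mul h1
  rw [one_mul] at this
  refine this.congr' ?_
  filter_upwards [eventually_ge_atTop (y+1)] with x hx
  have : rp (x-y) ≠ 0 := ne_of_gt (rp_pos (by omega))
  field_simp


section
variable {S : Type*} [Fintype S]

lemma kconv_apply (F G : ℕ → Matrix S S ℝ) (x : ℕ) (α β : S) :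
    kconv F G x α β = ∑ y ∈ Finset.range (x+1), ∑ γ, F y α γ * G (x-y) γ β := by
  simp [kconv, Matrix.sum_apply, Matrix.mul_apply]

lemma conv_hasSum (F G : ℕ → Matrix S S ℝ) (A Bg : Matrix S S ℝ)
    (hFs : ∀ α β, HasSum (fun x => F x α β) (A α β))
    (hGs : ∀ α β, HasSum (fun x => G x α β) (Bg α β)) (α β : S) :
    HasSum (fun x => kconv F G x α β) ((A * Bg) α β) := by
  have key : ∀ γ : S, HasSum (fun x => ∑ y ∈ Finset.range (x+1), F y α γ * G (x-y) γ β)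
      (A α γ * Bg γ β) := by
    intro γ
    have hf : Summable fun y => ‖F y α γ‖ := by
      refine ((hFs α γ).summable).abs.congr fun y => ?_
      rw [Real.norm_eq_abs]
    have hg : Summable fun y => ‖G y γ β‖ := by
      refine ((hGs γ β).summable).abs.congr fun y => ?_
      rw [Real.norm_eq_abs]
    have := hasSum_sum_range_mul_of_summable_norm hf hg
    rwa [(hFs α γ).tsum_eq, (hGs γ β).tsum_eq] at this
  have heq : (fun x => kconv F G x α β)
      = fun x => ∑ γ, ∑ y ∈ Finset.range (x+1), F y α γ * G (x-y) γ β := by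
    funext x; rw [kconv_apply]; exact Finset.sum_comm
  rw [Matrix.mul_apply, heq]
  exact hasSum_sum fun γ _ => key γ

lemma conv_tendsto (F G : ℕ → Matrix S S ℝ) (A Bg LF LG : Matrix S S ℝ) (tF tG : ℝ)
    (hF0 : ∀ x α β, 0 ≤ F x α β) (hG0 : ∀ x α β, 0 ≤ G x α β)
    (hFs : ∀ α β, HasSum (fun x => F x α β) (A α β))
    (hGs : ∀ α β, HasSum (fun x => G x α β) (Bg α β))
    (hFl : ∀ α β, Tendsto (fun x => rp x * F x α β) atTop (nhds (LF α β)))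
    (hGl : ∀ α β, Tendsto (fun x => rp x * G x α β) atTop (nhds (LG α β)))
    (htF : 0 ≤ tF) (htG : 0 ≤ tG)
    (hFb : ∀ x α β, rp x * F x α β ≤ tF)
    (hGb : ∀ x α β, rp x * G x α β ≤ tG) (α β : S) :
    Tendsto (fun x => rp x * kconv F G x α β) atTop
      (nhds ((A * LG + LF * Bg) α β)) := by
  classical
  set c2 : ℝ := (2:ℝ) ^ ((3:ℝ)/2) with hc2def
  set g1 : ℕ → ℕ → ℝ :=
    fun x y => if 2*y ≤ x then rp x * ∑ γ, F y α γ * G (x-y) γ β else 0 with hg1def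
  set g2 : ℕ → ℕ → ℝ :=
    fun x z => if 2*z < x then rp x * ∑ γ, F (x-z) α γ * G z γ β else 0 with hg2def
  have hg1supp : ∀ x, ∀ y ∉ Finset.range (x+1), g1 x y = 0 := by
    intro x y hy
    simp only [Finset.mem_range] at hy
    have : ¬ (2*y ≤ x) := by omega
    simp [hg1def, this]
  have hg2supp : ∀ x, ∀ z ∉ Finset.range (x+1), g2 x z = 0 := by
    intro x z hz
    simp only [Finset.mem_range] at hz
    have : ¬ (2*z < x) := by omega
    simp [hg2def, this]
  have hdecomp : ∀ x, rp x * kconv F G x α β = (∑' y, g1 x y) + (∑' z, g2 x z) := by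
    intro x
    rw [tsum_eq_sum (hg1supp x), tsum_eq_sum (hg2supp x)]
    have hrefl : ∑ z ∈ Finset.range (x+1), g2 x z
        = ∑ y ∈ Finset.range (x+1), g2 x (x - y) := by
      exact (Finset.sum_range_reflect (g2 x) (x+1)).symm
    rw [hrefl, ← Finset.sum_add_distrib, kconv_apply, Finset.mul_sum]
    apply Finset.sum_congr rfl
    intro y hy
    simp only [Finset.mem_range] at hy
    by_cases h : 2*y ≤ x
    · have h2 : ¬ (2*(x-y) < x) := by omega
      simp only [hg1def, hg2def, if_pos h, if_neg h2, add_zero]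
    · have h2 : 2*(x-y) < x := by omega
      have hxy : x - (x - y) = y := by omega
      simp only [hg1def, hg2def, if_neg h, if_pos h2, zero_add, hxy]
  have hS1 : Tendsto (fun x => ∑' y, g1 x y) atTop (nhds ((A * LG) α β)) := by
    have hlim : ∀ y, Tendsto (fun x => g1 x y) atTop (nhds (∑ γ, F y α γ * LG γ β)) := by
      intro y
      have h1 : Tendsto (fun x => rp x * ∑ γ, F y α γ * G (x - y) γ β) atTop
          (nhds (∑ γ, F y α γ * LG γ β)) := by
        have heq : (fun x => rp x * ∑ γ, F y α γ * G (x - y) γ β)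
            = fun x => ∑ γ, F y α γ * (rp x * G (x - y) γ β) := by
          funext x; rw [Finset.mul_sum]; apply Finset.sum_congr rfl; intros; ring
        rw [heq]
        exact tendsto_finset_sum _ fun γ _ =>
          (tendsto_rp_shift (hGl γ β) y).const_mul (F y α γ)
      refine Tendsto.congr' ?_ h1
      filter_upwards [eventually_ge_atTop (2*y)] with x hx
      simp [hg1def, hx]
    have hbound : ∀ x y, ‖g1 x y‖ ≤ (c2 * tG) * ∑ γ, F y α γ := by
      intro x y
      have hb0 : 0 ≤ (c2*tG) * ∑ γ, F y α γ :=
        mul_nonneg (mul_nonneg c2_nonneg htG) (Finset.sum_nonneg fun γ _ => hF0 _ _ _)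
      by_cases h : 2*y ≤ x
      · have hval : g1 x y = ∑ γ, F y α γ * (rp x * G (x-y) γ β) := by
          simp only [hg1def, if_pos h, Finset.mul_sum]
          apply Finset.sum_congr rfl; intros; ring
        rw [Real.norm_eq_abs, hval, abs_of_nonneg (Finset.sum_nonneg fun γ _ =>
          mul_nonneg (hF0 _ _ _) (mul_nonneg (rp_nonneg _) (hG0 _ _ _))), Finset.mul_sum]
        apply Finset.sum_le_sum
        intro γ _
        calc F y α γ * (rp x * G (x-y) γ β) ≤ F y α γ * (c2 * tG) :=
              mul_le_mul_of_nonneg_left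
                (shifted_bound htG (fun z => hGb z γ β) (fun z => hG0 z γ β) h) (hF0 _ _ _)
          _ = (c2*tG) * F y α γ := by ring
      · simp only [hg1def, if_neg h, norm_zero]
        exact hb0
    have hsummable : Summable (fun y => (c2*tG) * ∑ γ, F y α γ) :=
      Summable.mul_left _ (summable_sum fun γ _ => (hFs α γ).summable)
    have h := tendsto_tsum_of_dominated_convergence hsummable hlim
      (Eventually.of_forall fun x y => hbound x y)
    have hid : (∑' y, ∑ γ, F y α γ * LG γ β) = (A * LG) α β := by
      rw [Summable.tsum_finsetSum fun γ _ => ((hFs α γ).summable.mul_right _), Matrix.mul_apply]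
      apply Finset.sum_congr rfl
      intro γ _
      rw [tsum_mul_right, (hFs α γ).tsum_eq]
    rwa [hid] at h
  have hS2 : Tendsto (fun x => ∑' z, g2 x z) atTop (nhds ((LF * Bg) α β)) := by
    have hlim : ∀ z, Tendsto (fun x => g2 x z) atTop (nhds (∑ γ, LF α γ * G z γ β)) := by
      intro z
      have h1 : Tendsto (fun x => rp x * ∑ γ, F (x-z) α γ * G z γ β) atTop
          (nhds (∑ γ, LF α γ * G z γ β)) := by
        have heq : (fun x => rp x * ∑ γ, F (x-z) α γ * G z γ β)
            = fun x => ∑ γ, (rp x * F (x-z) α γ) * G z γ β := by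
          funext x; rw [Finset.mul_sum]; apply Finset.sum_congr rfl; intros; ring
        rw [heq]
        exact tendsto_finset_sum _ fun γ _ =>
          (tendsto_rp_shift (hFl α γ) z).mul_const (G z γ β)
      refine Tendsto.congr' ?_ h1
      filter_upwards [eventually_ge_atTop (2*z+1)] with x hx
      have : 2*z < x := by omega
      simp [hg2def, this]
    have hbound : ∀ x z, ‖g2 x z‖ ≤ (c2 * tF) * ∑ γ, G z γ β := by
      intro x z
      have hb0 : 0 ≤ (c2*tF) * ∑ γ, G z γ β :=
        mul_nonneg (mul_nonneg c2_nonneg htF) (Finset.sum_nonneg fun γ _ => hG0 _ _ _)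
      by_cases h : 2*z < x
      · have hval : g2 x z = ∑ γ, (rp x * F (x-z) α γ) * G z γ β := by
          simp only [hg2def, if_pos h, Finset.mul_sum]
          apply Finset.sum_congr rfl; intros; ring
        rw [Real.norm_eq_abs, hval, abs_of_nonneg (Finset.sum_nonneg fun γ _ =>
          mul_nonneg (mul_nonneg (rp_nonneg _) (hF0 _ _ _)) (hG0 _ _ _)), Finset.mul_sum]
        apply Finset.sum_le_sum
        intro γ _
        calc (rp x * F (x-z) α γ) * G z γ β ≤ (c2 * tF) * G z γ β :=
              mul_le_mul_of_nonneg_right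
                (shifted_bound htF (fun w => hFb w α γ) (fun w => hF0 w α γ) (by omega)) (hG0 _ _ _)
          _ = (c2*tF) * G z γ β := by ring
      · simp only [hg2def, if_neg h, norm_zero]
        exact hb0
    have hsummable : Summable (fun z => (c2*tF) * ∑ γ, G z γ β) :=
      Summable.mul_left _ (summable_sum fun γ _ => (hGs γ β).summable)
    have h := tendsto_tsum_of_dominated_convergence hsummable hlim
      (Eventually.of_forall fun x z => hbound x z)
    have hid : (∑' z, ∑ γ, LF α γ * G z γ β) = (LF * Bg) α β := by
      rw [Summable.tsum_finsetSum fun γ _ => ((hGs γ β).summable.mul_left _), Matrix.mul_apply]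
      apply Finset.sum_congr rfl
      intro γ _
      rw [tsum_mul_left, (hGs γ β).tsum_eq]
    rwa [hid] at h
  have h := hS1.add hS2
  rw [Matrix.add_apply]
  exact h.congr fun x => (hdecomp x).symm


end

section
variable {S : Type*} [Fintype S] [DecidableEq S]

/-- constant matrix with all entries `t`. -/
def cmat (S : Type*) [Fintype S] (t : ℝ) : Matrix S S ℝ := Matrix.of fun _ _ => t

/-- `Smat B t k = ∑_{i<k} B^i (t·J) B^(k-1-i)`. -/
noncomputable def Smat (B : Matrix S S ℝ) (t : ℝ) (k : ℕ) : Matrix S S ℝ :=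
  ∑ i ∈ Finset.range k, B^i * cmat S t * B^(k-1-i)

lemma sum_pow_recur (B T : Matrix S S ℝ) (k : ℕ) :
    ∑ i ∈ Finset.range (k+1), B^i * T * B^(k-i)
      = T * B^k + B * ∑ i ∈ Finset.range k, B^i * T * B^(k-1-i) := by
  rw [Finset.sum_range_succ', pow_zero, one_mul, add_comm]
  congr 1
  rw [Finset.mul_sum]
  apply Finset.sum_congr rfl
  intro i hi
  have h1 : k - (i+1) = k - 1 - i := by omega
  rw [h1, pow_succ', mul_assoc, mul_assoc, mul_assoc]

lemma kpow_nonneg (M : ℕ → Matrix S S ℝ) (hM : ∀ x α β, 0 ≤ M x α β) :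
    ∀ k x α β, 0 ≤ kpow M k x α β := by
  intro k
  induction k with
  | zero =>
    intro x α β
    by_cases h : x = 0 <;> simp [kpow, h, Matrix.one_apply] <;> positivity
  | succ k ih =>
    intro x α β
    show 0 ≤ kconv M (kpow M k) x α β
    rw [kconv_apply]
    exact Finset.sum_nonneg fun y _ => Finset.sum_nonneg fun γ _ =>
      mul_nonneg (hM _ _ _) (ih _ _ _)

lemma kpow_hasSum (M : ℕ → Matrix S S ℝ) (B : Matrix S S ℝ)
    (hB : ∀ α β, HasSum (fun x => M x α β) (B α β)) :
    ∀ k α β, HasSum (fun x => kpow M k x α β) ((B^k) α β) := by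
  intro k
  induction k with
  | zero =>
    intro α β
    have heq : (fun x => kpow M 0 x α β)
        = fun x => if x = 0 then (1 : Matrix S S ℝ) α β else 0 := by
      funext x
      by_cases h : x = 0 <;> simp [kpow, h]
    rw [heq, pow_zero]
    exact hasSum_ite_eq 0 _
  | succ k ih =>
    intro α β
    have := conv_hasSum M (kpow M k) B (B^k) hB ih α β
    rwa [← pow_succ'] at this

lemma smat_nonneg (B : Matrix S S ℝ) (t : ℝ) (ht : 0 ≤ t)
    (hBp : ∀ i (α β : S), 0 ≤ (B^i) α β) :
    ∀ k (α β : S), 0 ≤ Smat B t k α β := by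
  intro k α β
  rw [Smat, Matrix.sum_apply]
  refine Finset.sum_nonneg fun i _ => ?_
  rw [Matrix.mul_apply]
  refine Finset.sum_nonneg fun δ _ => mul_nonneg ?_ (hBp _ _ _)
  rw [Matrix.mul_apply]
  exact Finset.sum_nonneg fun γ _ => mul_nonneg (hBp _ _ _) ht

lemma smat_le (B : Matrix S S ℝ) (t C ρ : ℝ) (ht : 0 ≤ t) (hC : 0 ≤ C) (hρ : 0 ≤ ρ)
    (hBp : ∀ i (α β : S), 0 ≤ (B^i) α β)
    (hBC : ∀ i (α β : S), (B^i) α β ≤ C * ρ^i) :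
    ∀ k (α β : S), Smat B t k α β
      ≤ (k:ℝ) * ((Fintype.card S : ℝ)^2 * t * C^2) * ρ^(k-1) := by
  intro k α β
  rw [Smat, Matrix.sum_apply]
  have key : ∀ i ∈ Finset.range k, (B^i * cmat S t * B^(k-1-i)) α β
      ≤ (Fintype.card S : ℝ)^2 * t * C^2 * ρ^(k-1) := by
    intro i hi
    simp only [Finset.mem_range] at hi
    rw [Matrix.mul_apply]
    have hterm : ∀ δ, (B^i * cmat S t) α δ * (B^(k-1-i)) δ β
        ≤ ((Fintype.card S : ℝ) * t * C^2 * ρ^(k-1)) := by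
      intro δ
      rw [Matrix.mul_apply]
      have h1 : (∑ γ, (B^i) α γ * cmat S t γ δ) ≤ (Fintype.card S : ℝ) * (C * ρ^i * t) := by
        calc (∑ γ, (B^i) α γ * cmat S t γ δ) ≤ ∑ _γ : S, (C * ρ^i * t) := by
              apply Finset.sum_le_sum
              intro γ _
              have hc : cmat S t γ δ = t := rfl
              rw [hc]
              exact mul_le_mul_of_nonneg_right (hBC i α γ) ht
          _ = (Fintype.card S : ℝ) * (C * ρ^i * t) := by
              rw [Finset.sum_const, Finset.card_univ, nsmul_eq_mul]
      have hb0 : (0:ℝ) ≤ (Fintype.card S : ℝ) * (C * ρ^i * t) :=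
        mul_nonneg (Nat.cast_nonneg _) (mul_nonneg (mul_nonneg hC (pow_nonneg hρ i)) ht)
      calc (∑ γ, (B^i) α γ * cmat S t γ δ) * (B^(k-1-i)) δ β
          ≤ ((Fintype.card S : ℝ) * (C * ρ^i * t)) * (C * ρ^(k-1-i)) :=
            mul_le_mul h1 (hBC _ _ _) (hBp _ _ _) hb0
        _ = (Fintype.card S : ℝ) * t * C^2 * (ρ^i * ρ^(k-1-i)) := by ring
        _ = (Fintype.card S : ℝ) * t * C^2 * ρ^(k-1) := by
            rw [← pow_add]
            congr 2
            omega
    calc (∑ δ, (B^i * cmat S t) α δ * (B^(k-1-i)) δ β)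
        ≤ ∑ _δ : S, ((Fintype.card S : ℝ) * t * C^2 * ρ^(k-1)) :=
          Finset.sum_le_sum fun δ _ => hterm δ
      _ = (Fintype.card S : ℝ)^2 * t * C^2 * ρ^(k-1) := by
          rw [Finset.sum_const, Finset.card_univ, nsmul_eq_mul]; ring
  calc (∑ i ∈ Finset.range k, (B^i * cmat S t * B^(k-1-i)) α β)
      ≤ ∑ _i ∈ Finset.range k, ((Fintype.card S:ℝ)^2 * t * C^2 * ρ^(k-1)) :=
        Finset.sum_le_sum key
    _ = (k:ℝ) * ((Fintype.card S:ℝ)^2 * t * C^2) * ρ^(k-1) := by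
        rw [Finset.sum_const, Finset.card_range, nsmul_eq_mul]; ring

lemma kpow_bound (M : ℕ → Matrix S S ℝ) (B : Matrix S S ℝ) (tM : ℝ)
    (hM : ∀ x (α β : S), 0 ≤ M x α β)
    (hB : ∀ α β, HasSum (fun x => M x α β) (B α β))
    (htM : 0 ≤ tM) (hMb : ∀ x (α β : S), rp x * M x α β ≤ tM) :
    ∀ k x, 1 ≤ x → ∀ α β, kpow M k x α β
      ≤ (k:ℝ)^((3:ℝ)/2) * (rp x)⁻¹ * Smat B tM k α β := by
  have hBp : ∀ i (α β : S), 0 ≤ (B^i) α β := fun i α β =>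
    (kpow_hasSum M B hB i α β).nonneg (fun x => kpow_nonneg M hM i x α β)
  have hK0 := kpow_nonneg M hM
  have hsm := smat_nonneg B tM htM hBp
  intro k
  induction k with
  | zero =>
    intro x hx α β
    have hx0 : x ≠ 0 := by omega
    have h0 : kpow M 0 x α β = 0 := by
      show (if x = 0 then (1:Matrix S S ℝ) else 0) α β = 0
      rw [if_neg hx0]
      rfl
    rw [h0, Smat]
    simp
  | succ k ih =>
    intro x hx α β
    set c : ℝ := ((k+1:ℕ):ℝ)^((3:ℝ)/2) * (rp x)⁻¹ with hcdef
    have hc0 : 0 ≤ c :=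
      mul_nonneg (Real.rpow_nonneg (Nat.cast_nonneg _) _) (inv_nonneg.2 (rp_nonneg _))
    show kconv M (kpow M k) x α β ≤ c * Smat B tM (k+1) α β
    rw [kconv_apply]
    have hsplit := Finset.sum_filter_add_sum_filter_not (Finset.range (x+1))
      (fun y => x ≤ (k+1)*y) (fun y => ∑ γ, M y α γ * kpow M k (x-y) γ β)
    set f1 := (Finset.range (x+1)).filter (fun y => x ≤ (k+1)*y) with hf1
    set f2 := (Finset.range (x+1)).filter (fun y => ¬ x ≤ (k+1)*y) with hf2
    rw [← hsplit]
    have hb1 : ∑ y ∈ f1, ∑ γ, M y α γ * kpow M k (x-y) γ β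
        ≤ c * (cmat S tM * B^k) α β := by
      have hMy : ∀ y ∈ f1, ∀ γ, M y α γ ≤ tM * c := by
        intro y hy γ
        rw [hf1, Finset.mem_filter, Finset.mem_range] at hy
        obtain ⟨hy1, hy2⟩ := hy
        have hy0 : 1 ≤ y := by
          by_contra hcon
          have hyy : y = 0 := by omega
          rw [hyy, Nat.mul_zero] at hy2
          omega
        have hrpy := rp_pos hy0
        have h1 : M y α γ ≤ tM / rp y := by
          rw [le_div_iff₀ hrpy]
          calc M y α γ * rp y = rp y * M y α γ := by ring
            _ ≤ tM := hMb _ _ _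
        refine h1.trans ?_
        have hfac : (rp y)⁻¹ ≤ ((k+1:ℕ):ℝ)^((3:ℝ)/2) * (rp x)⁻¹ := by
          have hkey : rp x ≤ ((k+1:ℕ):ℝ)^((3:ℝ)/2) * rp y := by
            have hxle : (x:ℝ) ≤ ((k+1:ℕ):ℝ) * (y:ℝ) := by exact_mod_cast hy2
            calc rp x = (x:ℝ)^((3:ℝ)/2) := rfl
              _ ≤ (((k+1:ℕ):ℝ) * (y:ℝ))^((3:ℝ)/2) :=
                Real.rpow_le_rpow (Nat.cast_nonneg _) hxle (by norm_num)
              _ = ((k+1:ℕ):ℝ)^((3:ℝ)/2) * (y:ℝ)^((3:ℝ)/2) :=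
                Real.mul_rpow (Nat.cast_nonneg _) (Nat.cast_nonneg _)
          rw [inv_eq_one_div, ← div_eq_mul_inv,
            div_le_div_iff₀ hrpy (rp_pos hx)]
          linarith [hkey]
        calc tM / rp y = tM * (rp y)⁻¹ := by rw [div_eq_mul_inv]
          _ ≤ tM * c := mul_le_mul_of_nonneg_left hfac htM
      have hsum1 : ∀ γ, ∑ y ∈ f1, kpow M k (x-y) γ β ≤ (B^k) γ β := by
        intro γ
        have hinj : ∀ a ∈ f1, ∀ b ∈ f1, x - a = x - b → a = b := by
          intro a ha b hb hab
          rw [hf1, Finset.mem_filter, Finset.mem_range] at ha hb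
          omega
        have himg : ∑ y ∈ f1, kpow M k (x-y) γ β
            = ∑ z ∈ f1.image (fun y => x - y), kpow M k z γ β :=
          (Finset.sum_image (f := fun z => kpow M k z γ β) (g := fun y => x - y) (s := f1) hinj).symm
        rw [himg]
        exact sum_le_hasSum _ (fun z _ => hK0 k z γ β) (kpow_hasSum M B hB k γ β)
      calc ∑ y ∈ f1, ∑ γ, M y α γ * kpow M k (x-y) γ β
          = ∑ γ, ∑ y ∈ f1, M y α γ * kpow M k (x-y) γ β := Finset.sum_comm
        _ ≤ ∑ γ, (tM * c) * (B^k) γ β := by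
            apply Finset.sum_le_sum
            intro γ _
            calc ∑ y ∈ f1, M y α γ * kpow M k (x-y) γ β
                ≤ ∑ y ∈ f1, (tM * c) * kpow M k (x-y) γ β :=
                  Finset.sum_le_sum fun y hy =>
                    mul_le_mul_of_nonneg_right (hMy y hy γ) (hK0 _ _ _ _)
              _ = (tM * c) * ∑ y ∈ f1, kpow M k (x-y) γ β := by rw [Finset.mul_sum]
              _ ≤ (tM * c) * (B^k) γ β :=
                  mul_le_mul_of_nonneg_left (hsum1 γ) (mul_nonneg htM hc0)
        _ = c * (cmat S tM * B^k) α β := by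
            rw [Matrix.mul_apply, Finset.mul_sum]
            apply Finset.sum_congr rfl
            intro γ _
            have hcm : cmat S tM α γ = tM := rfl
            rw [hcm]; ring
    have hb2 : ∑ y ∈ f2, ∑ γ, M y α γ * kpow M k (x-y) γ β
        ≤ c * (B * Smat B tM k) α β := by
      have hkp : ∀ y ∈ f2, ∀ γ, kpow M k (x-y) γ β ≤ c * Smat B tM k γ β := by
        intro y hy γ
        rw [hf2, Finset.mem_filter, Finset.mem_range] at hy
        obtain ⟨hy1, hy2⟩ := hy
        have hy2' : (k+1)*y < x := by omega
        have hxy1 : 1 ≤ x - y := by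
          have hylt : y < x := by
            rcases Nat.eq_zero_or_pos y with h|h
            · omega
            · calc y ≤ (k+1)*y := Nat.le_mul_of_pos_left y (by omega)
                _ < x := hy2'
          omega
        have hIH := ih (x-y) hxy1 γ β
        refine hIH.trans ?_
        have hfac : (k:ℝ)^((3:ℝ)/2) * (rp (x-y))⁻¹ ≤ c := by
          have hcast : ((x - y : ℕ):ℝ) = (x:ℝ) - (y:ℝ) := by
            push_cast [Nat.cast_sub (by omega : y ≤ x)]; ring
          have hle : (k:ℝ) * (x:ℝ) ≤ ((k+1:ℕ):ℝ) * ((x-y:ℕ):ℝ) := by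
            rw [hcast]
            have h2 : ((k:ℝ)+1) * (y:ℝ) ≤ (x:ℝ) := by
              have hnat : (k+1)*y ≤ x := le_of_lt hy2'
              exact_mod_cast hnat
            push_cast
            nlinarith [h2]
          have hkey : (k:ℝ)^((3:ℝ)/2) * rp x ≤ ((k+1:ℕ):ℝ)^((3:ℝ)/2) * rp (x-y) := by
            calc (k:ℝ)^((3:ℝ)/2) * rp x = ((k:ℝ) * (x:ℝ))^((3:ℝ)/2) :=
                  (Real.mul_rpow (Nat.cast_nonneg _) (Nat.cast_nonneg _)).symm
              _ ≤ (((k+1:ℕ):ℝ) * ((x-y:ℕ):ℝ))^((3:ℝ)/2) :=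
                  Real.rpow_le_rpow (by positivity) hle (by norm_num)
              _ = ((k+1:ℕ):ℝ)^((3:ℝ)/2) * rp (x-y) :=
                  Real.mul_rpow (Nat.cast_nonneg _) (Nat.cast_nonneg _)
          rw [hcdef, ← div_eq_mul_inv, ← div_eq_mul_inv,
            div_le_div_iff₀ (rp_pos hxy1) (rp_pos hx)]
          linarith [hkey]
        exact mul_le_mul_of_nonneg_right hfac (hsm k γ β)
      have hMsum : ∀ γ, ∑ y ∈ f2, M y α γ ≤ B α γ := fun γ =>
        sum_le_hasSum f2 (fun y _ => hM y α γ) (hB α γ)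
      calc ∑ y ∈ f2, ∑ γ, M y α γ * kpow M k (x-y) γ β
          = ∑ γ, ∑ y ∈ f2, M y α γ * kpow M k (x-y) γ β := Finset.sum_comm
        _ ≤ ∑ γ, (B α γ) * (c * Smat B tM k γ β) := by
            apply Finset.sum_le_sum
            intro γ _
            calc ∑ y ∈ f2, M y α γ * kpow M k (x-y) γ β
                ≤ ∑ y ∈ f2, M y α γ * (c * Smat B tM k γ β) :=
                  Finset.sum_le_sum fun y hy =>
                    mul_le_mul_of_nonneg_left (hkp y hy γ) (hM _ _ _)
              _ = (∑ y ∈ f2, M y α γ) * (c * Smat B tM k γ β) := by rw [Finset.sum_mul]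
              _ ≤ B α γ * (c * Smat B tM k γ β) :=
                  mul_le_mul_of_nonneg_right (hMsum γ) (mul_nonneg hc0 (hsm k γ β))
        _ = c * (B * Smat B tM k) α β := by
            rw [Matrix.mul_apply, Finset.mul_sum]
            apply Finset.sum_congr rfl
            intro γ _
            ring
    have hrec : Smat B tM (k+1) = cmat S tM * B^k + B * Smat B tM k :=
      sum_pow_recur B (cmat S tM) k
    calc ∑ y ∈ f1, ∑ γ, M y α γ * kpow M k (x-y) γ β
          + ∑ y ∈ f2, ∑ γ, M y α γ * kpow M k (x-y) γ β
        ≤ c * (cmat S tM * B^k) α β + c * (B * Smat B tM k) α β := add_le_add hb1 hb2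
      _ = c * Smat B tM (k+1) α β := by
          rw [hrec, Matrix.add_apply]; ring

end
end SDPAux

/-- Strictly delocalized asymptotics: if the total-mass matrix `B` has spectral radius
`< 1` (geometric decay of its powers), then `Z_{α,β}(x) := Σ_{k ≥ 1}[M^{*k}]_{α,β}(x)`
satisfies `x^{3/2} Z_{α,β}(x) → [(1-B)^{-1} L (1-B)^{-1}]_{α,β}`, where
`(1-B)^{-1} = Σ_k B^k` entrywise. -/
theorem strictly_delocalized_partition_asymptotics
    {S : Type*} [Fintype S] [DecidableEq S]
    (M : ℕ → Matrix S S ℝ) (L B R : Matrix S S ℝ)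
    (hM : ∀ x α β, 0 ≤ M x α β)
    (htail : ∀ α β, Filter.Tendsto (fun x : ℕ => (x : ℝ) ^ ((3 : ℝ) / 2) * M x α β)
      Filter.atTop (nhds (L α β)))
    (hB : ∀ α β, HasSum (fun x : ℕ => M x α β) (B α β))
    (hspec : ∃ ρ : ℝ, ρ < 1 ∧ ∃ C : ℝ, ∀ (k : ℕ) (α β : S), (B ^ k) α β ≤ C * ρ ^ k)
    (hR : ∀ α β, HasSum (fun k : ℕ => (B ^ k) α β) (R α β)) :
    ∀ α β : S,
      Filter.Tendsto
        (fun x : ℕ => (x : ℝ) ^ ((3 : ℝ) / 2) * ∑' k : ℕ, (kpow M (k + 1)) x α β)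
        Filter.atTop (nhds ((R * L * R) α β)) := by
  classical
  rcases isEmpty_or_nonempty S with hS | hS
  · intro α β
    exact (IsEmpty.false α).elim
  -- tail limits in rp form
  have htail' : ∀ α β, Tendsto (fun x : ℕ => rp x * M x α β) atTop (nhds (L α β)) := htail
  -- nonnegativity of powers
  have hBp : ∀ i (α β : S), 0 ≤ (B^i) α β := fun i α β =>
    (kpow_hasSum M B hB i α β).nonneg (fun x => kpow_nonneg M hM i x α β)
  -- normalize the spectral hypothesis
  obtain ⟨ρ₀, hρ₀lt, C₀, hC₀⟩ := hspec
  obtain ⟨α₀⟩ := hS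
  have hC₀1 : 1 ≤ C₀ := by
    have h := hC₀ 0 α₀ α₀
    simpa [Matrix.one_apply] using h
  have hρ₀gt : -1 < ρ₀ := by
    by_contra hcon
    push_neg at hcon
    have h1 := hC₀ 1 α₀ α₀
    have h2 := hBp 1 α₀ α₀
    nlinarith
  set ρ : ℝ := |ρ₀| with hρdef
  have hρ0 : 0 ≤ ρ := abs_nonneg _
  have hρ1 : ρ < 1 := abs_lt.2 ⟨hρ₀gt, hρ₀lt⟩
  have hC₀0 : 0 ≤ C₀ := by linarith
  have hBC : ∀ k (α β : S), (B^k) α β ≤ C₀ * ρ^k := by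
    intro k α β
    refine (hC₀ k α β).trans ?_
    have : ρ₀^k ≤ ρ^k := by
      rw [hρdef, ← abs_pow]
      exact le_abs_self _
    exact mul_le_mul_of_nonneg_left this hC₀0
  -- uniform bound on the tail of M
  have hbdd : ∀ α β : S, ∃ t : ℝ, ∀ x, rp x * M x α β ≤ t := by
    intro α β
    obtain ⟨b, hb⟩ := (htail' α β).bddAbove_range
    exact ⟨b, fun x => hb (Set.mem_range_self x)⟩
  choose t ht using hbdd
  have ht0 : ∀ α β, 0 ≤ t α β := by
    intro α β
    have := ht α β 0
    rw [rp_zero, zero_mul] at this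
    linarith
  set tM : ℝ := ∑ α : S, ∑ β : S, t α β with htMdef
  have htM0 : 0 ≤ tM := Finset.sum_nonneg fun α _ => Finset.sum_nonneg fun β _ => ht0 α β
  have hMb : ∀ x (α β : S), rp x * M x α β ≤ tM := by
    intro x α β
    refine (ht α β x).trans ?_
    calc t α β ≤ ∑ β' : S, t α β' :=
          Finset.single_le_sum (fun β' _ => ht0 α β') (Finset.mem_univ β)
      _ ≤ tM := Finset.single_le_sum
          (fun α' _ => Finset.sum_nonneg fun β' _ => ht0 α' β') (Finset.mem_univ α)
  -- the uniform per-k bound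
  set E : ℝ := (Fintype.card S : ℝ)^2 * tM * C₀^2 with hEdef
  have hE0 : 0 ≤ E := by positivity
  set bk : ℕ → ℝ := fun k => ((k+1:ℕ):ℝ)^((3:ℝ)/2) * (((k+1:ℕ):ℝ) * E * ρ^k) with hbkdef
  have hbk0 : ∀ k, 0 ≤ bk k := by
    intro k
    apply mul_nonneg (Real.rpow_nonneg (Nat.cast_nonneg _) _)
    positivity
  have hkb : ∀ k x (α β : S), rp x * kpow M (k+1) x α β ≤ bk k := by
    intro k x α β
    rcases Nat.eq_zero_or_pos x with hx | hx
    · subst hx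
      rw [rp_zero, zero_mul]
      exact hbk0 k
    · have h1 := kpow_bound M B tM hM hB htM0 hMb (k+1) x hx α β
      have h2 : rp x * kpow M (k+1) x α β
          ≤ rp x * (((k+1:ℕ):ℝ)^((3:ℝ)/2) * (rp x)⁻¹ * Smat B tM (k+1) α β) :=
        mul_le_mul_of_nonneg_left h1 (rp_nonneg x)
      refine h2.trans ?_
      have hrpne : rp x ≠ 0 := ne_of_gt (rp_pos hx)
      have h3 : rp x * (((k+1:ℕ):ℝ)^((3:ℝ)/2) * (rp x)⁻¹ * Smat B tM (k+1) α β)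
          = ((k+1:ℕ):ℝ)^((3:ℝ)/2) * Smat B tM (k+1) α β := by
        field_simp
      rw [h3]
      have h4 := smat_le B tM C₀ ρ htM0 hC₀0 hρ0 hBp hBC (k+1) α β
      have h5 : ((k+1:ℕ):ℝ) * ((Fintype.card S : ℝ)^2 * tM * C₀^2) * ρ^(k+1-1)
          = ((k+1:ℕ):ℝ) * E * ρ^k := by
        rw [hEdef]
        norm_num
      rw [h5] at h4
      exact mul_le_mul_of_nonneg_left h4 (Real.rpow_nonneg (Nat.cast_nonneg _) _)
  -- summability of the bound
  have hbksum : Summable bk := by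
    have hnorm : ‖ρ‖ < 1 := by
      rw [Real.norm_eq_abs, abs_of_nonneg hρ0]
      exact hρ1
    have h3 := summable_pow_mul_geometric_of_norm_lt_one (R := ℝ) 3 hnorm
    have h2 := summable_pow_mul_geometric_of_norm_lt_one (R := ℝ) 2 hnorm
    have h1 := summable_pow_mul_geometric_of_norm_lt_one (R := ℝ) 1 hnorm
    have h0 : Summable (fun k : ℕ => ρ^k) := summable_geometric_of_lt_one hρ0 hρ1
    have hcube : Summable (fun k : ℕ => (((k:ℝ)+1)^3 * ρ^k) * E) := by
      apply Summable.mul_right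
      refine (((h3.add (h2.mul_left 3)).add (h1.mul_left 3)).add h0).congr fun k => ?_
      ring
    apply Summable.of_nonneg_of_le hbk0 ?_ hcube
    intro k
    rw [hbkdef]
    have ha1 : (1:ℝ) ≤ ((k+1:ℕ):ℝ) := by exact_mod_cast Nat.one_le_iff_ne_zero.2 (Nat.succ_ne_zero k)
    have hrp32 : ((k+1:ℕ):ℝ)^((3:ℝ)/2) ≤ ((k+1:ℕ):ℝ)^2 := by
      calc ((k+1:ℕ):ℝ)^((3:ℝ)/2) ≤ ((k+1:ℕ):ℝ)^((2:ℕ):ℝ) :=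
            Real.rpow_le_rpow_of_exponent_le ha1 (by norm_num)
        _ = ((k+1:ℕ):ℝ)^(2:ℕ) := Real.rpow_natCast _ 2
    calc ((k+1:ℕ):ℝ)^((3:ℝ)/2) * (((k+1:ℕ):ℝ) * E * ρ^k)
        ≤ ((k+1:ℕ):ℝ)^2 * (((k+1:ℕ):ℝ) * E * ρ^k) := by
          apply mul_le_mul_of_nonneg_right hrp32
          positivity
      _ = (((k:ℝ)+1)^3 * ρ^k) * E := by push_cast; ring
  -- per-k tendsto
  set Lmat : ℕ → Matrix S S ℝ := fun k => ∑ i ∈ Finset.range (k+1), B^i * L * B^(k-i)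
    with hLmatdef
  have hLrec : ∀ k, Lmat (k+1) = L * B^(k+1) + B * Lmat k := by
    intro k
    exact sum_pow_recur B L (k+1)
  have hkt : ∀ k (α β : S),
      Tendsto (fun x => rp x * kpow M (k+1) x α β) atTop (nhds (Lmat k α β)) := by
    intro k
    induction k with
    | zero =>
      intro α β
      have hGs : ∀ (γ β : S), HasSum (fun x => kpow M 0 x γ β) (((1 : Matrix S S ℝ)) γ β) := by
        intro γ β
        have := kpow_hasSum M B hB 0 γ β
        rwa [pow_zero] at this
      have hGl : ∀ (γ β : S), Tendsto (fun x => rp x * kpow M 0 x γ β) atTop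
          (nhds ((0 : Matrix S S ℝ) γ β)) := by
        intro γ β
        rw [Matrix.zero_apply]
        refine Tendsto.congr' ?_ tendsto_const_nhds
        filter_upwards [eventually_ge_atTop 1] with x hx
        have h0 : kpow M 0 x γ β = 0 := by
          show (if x = 0 then (1:Matrix S S ℝ) else 0) γ β = 0
          rw [if_neg (by omega : ¬ x = 0)]
          rfl
        rw [h0, mul_zero]
      have hGb : ∀ x (γ β : S), rp x * kpow M 0 x γ β ≤ 0 := by
        intro x γ β
        rcases Nat.eq_zero_or_pos x with hx | hx
        · subst hx; rw [rp_zero, zero_mul]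
        · have h0 : kpow M 0 x γ β = 0 := by
            show (if x = 0 then (1:Matrix S S ℝ) else 0) γ β = 0
            rw [if_neg (by omega : ¬ x = 0)]
            rfl
          rw [h0, mul_zero]
      have h := conv_tendsto M (kpow M 0) B (1 : Matrix S S ℝ) L (0 : Matrix S S ℝ)
        tM 0 hM (kpow_nonneg M hM 0) hB hGs htail' hGl htM0 le_rfl hMb hGb α β
      have hzero : B * (0 : Matrix S S ℝ) + L * 1 = Lmat 0 := by
        rw [hLmatdef]
        simp [Finset.sum_range_one]
      rw [hzero] at h
      exact h
    | succ k ih =>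
      intro α β
      have h := conv_tendsto M (kpow M (k+1)) B (B^(k+1)) L (Lmat k) tM (bk k)
        hM (kpow_nonneg M hM (k+1)) hB (kpow_hasSum M B hB (k+1)) htail' ih
        htM0 (hbk0 k) hMb (fun x γ β' => hkb k x γ β') α β
      have hrw : B * Lmat k + L * B^(k+1) = Lmat (k+1) := by
        rw [hLrec k]
        rw [add_comm]
      rw [hrw] at h
      exact h
  -- sum of the limits
  intro α β
  have hLsum : HasSum (fun k => Lmat k α β) ((R * L * R) α β) := by
    have hinner : ∀ γ δ : S, HasSum
        (fun k => ∑ i ∈ Finset.range (k+1), ((B^i) α γ) * ((L γ δ) * ((B^(k-i)) δ β)))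
        (R α γ * (L γ δ * R δ β)) := by
      intro γ δ
      have hf : Summable fun i => ‖(B^i) α γ‖ := by
        refine ((hR α γ).summable).abs.congr fun i => ?_
        rw [Real.norm_eq_abs]
      have hg : Summable fun j => ‖L γ δ * (B^j) δ β‖ := by
        have : Summable fun j => |L γ δ| * (B^j) δ β := ((hR δ β).summable).mul_left _
        refine this.congr fun j => ?_
        rw [Real.norm_eq_abs, abs_mul, abs_of_nonneg (hBp _ _ _)]
      have h := hasSum_sum_range_mul_of_summable_norm hf hg
      rw [(hR α γ).tsum_eq] at h
      have htg : (∑' j, L γ δ * (B^j) δ β) = L γ δ * R δ β := by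
        rw [tsum_mul_left, (hR δ β).tsum_eq]
      rwa [htg] at h
    have hterm : ∀ k, Lmat k α β
        = ∑ γ, ∑ δ, ∑ i ∈ Finset.range (k+1), ((B^i) α γ) * ((L γ δ) * ((B^(k-i)) δ β)) := by
      intro k
      calc Lmat k α β
          = ∑ i ∈ Finset.range (k+1), ∑ γ, ∑ δ,
              ((B^i) α γ) * ((L γ δ) * ((B^(k-i)) δ β)) := by
            rw [hLmatdef]
            simp only [Matrix.sum_apply]
            apply Finset.sum_congr rfl
            intro i _
            rw [Matrix.mul_apply]
            calc (∑ δ, (B^i * L) α δ * (B^(k-i)) δ β)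
                = ∑ δ, ∑ γ, ((B^i) α γ) * ((L γ δ) * ((B^(k-i)) δ β)) := by
                  apply Finset.sum_congr rfl
                  intro δ _
                  rw [Matrix.mul_apply, Finset.sum_mul]
                  apply Finset.sum_congr rfl
                  intros; ring
              _ = ∑ γ, ∑ δ, ((B^i) α γ) * ((L γ δ) * ((B^(k-i)) δ β)) := Finset.sum_comm
        _ = ∑ γ, ∑ i ∈ Finset.range (k+1), ∑ δ,
              ((B^i) α γ) * ((L γ δ) * ((B^(k-i)) δ β)) := Finset.sum_comm
        _ = ∑ γ, ∑ δ, ∑ i ∈ Finset.range (k+1),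
              ((B^i) α γ) * ((L γ δ) * ((B^(k-i)) δ β)) :=
            Finset.sum_congr rfl fun γ _ => Finset.sum_comm
    have hval : (R * L * R) α β = ∑ γ, ∑ δ, R α γ * (L γ δ * R δ β) := by
      rw [Matrix.mul_apply]
      calc (∑ δ, (R * L) α δ * R δ β)
          = ∑ δ, ∑ γ, R α γ * (L γ δ * R δ β) := by
            apply Finset.sum_congr rfl
            intro δ _
            rw [Matrix.mul_apply, Finset.sum_mul]
            apply Finset.sum_congr rfl
            intros; ring
        _ = ∑ γ, ∑ δ, R α γ * (L γ δ * R δ β) := Finset.sum_comm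
    rw [hval]
    have h := hasSum_sum (s := Finset.univ)
      (f := fun γ k => ∑ δ, ∑ i ∈ Finset.range (k+1),
        ((B^i) α γ) * ((L γ δ) * ((B^(k-i)) δ β)))
      (a := fun γ => ∑ δ, R α γ * (L γ δ * R δ β))
      (fun γ _ => hasSum_sum (s := Finset.univ)
        (f := fun δ k => ∑ i ∈ Finset.range (k+1),
          ((B^i) α γ) * ((L γ δ) * ((B^(k-i)) δ β)))
        (a := fun δ => R α γ * (L γ δ * R δ β))
        (fun δ _ => hinner γ δ))
    have hfun : (fun k => Lmat k α β)
        = fun k => ∑ γ, ∑ δ, ∑ i ∈ Finset.range (k+1),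
            ((B^i) α γ) * ((L γ δ) * ((B^(k-i)) δ β)) := funext hterm
    rw [hfun]
    exact h
  have hnormb : ∀ x k, ‖rp x * kpow M (k+1) x α β‖ ≤ bk k := by
    intro x k
    rw [Real.norm_eq_abs,
      abs_of_nonneg (mul_nonneg (rp_nonneg x) (kpow_nonneg M hM (k+1) x α β))]
    exact hkb k x α β
  have hdct := tendsto_tsum_of_dominated_convergence
    (f := fun x k => rp x * kpow M (k+1) x α β)
    (g := fun k => Lmat k α β)
    hbksum (fun k => hkt k α β)
    (Eventually.of_forall fun x k => hnormb x k)
  rw [hLsum.tsum_eq] at hdct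
  refine hdct.congr fun x => ?_
  exact tsum_mul_left
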